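/- arXiv:1907.03024 — 4 statements merged into one kernel-verified Lean document; each statement's English description precedes it below -/
import Mathlib

section
/- Let X be a Hausdorff topological space and let Γ ⊆ Homeo(X) be a subgroup with small supports everywhere. Let f, h ∈ Homeo(X), and suppose there exists a group isomorphism φ : ⟨Γ, f⟩ → ⟨Γ, h⟩ such that φ(γ) = γ for every γ ∈ Γ and φ(f) = h. Then h = f. -/
open Set Topology

variable {X : Type*} [TopologicalSpace X]

/-- The group of self-homeomorphisms of `X`, with `(f * g) x = f (g x)`. -/
instance : Group (X ≃ₜ X) where
  mul f g := g.trans f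
  one := Homeomorph.refl X
  inv := Homeomorph.symm
  mul_assoc _ _ _ := Homeomorph.ext fun _ => rfl
  one_mul _ := Homeomorph.ext fun _ => rfl
  mul_one _ := Homeomorph.ext fun _ => rfl
  inv_mul_cancel f := Homeomorph.ext fun x => f.symm_apply_apply x

/-- The support of a homeomorphism: the closure of the set of non-fixed points. -/
def Supp (f : X ≃ₜ X) : Set X := closure {x | f x ≠ x}

/-- A subgroup `Γ ⊆ Homeo(X)` has small supports everywhere if every nonempty open set
contains the support of some nontrivial element of `Γ`. -/
def SmallSupportsEverywhere (Γ : Subgroup (X ≃ₜ X)) : Prop :=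
  ∀ U : Set X, IsOpen U → U.Nonempty → ∃ γ ∈ Γ, γ ≠ 1 ∧ Supp γ ⊆ U

lemma fix_of_supp {g : X ≃ₜ X} {S : Set X} (hs : Supp g ⊆ S) {a : X} (ha : a ∉ S) :
    g a = a := by
  by_contra hne
  exact ha (hs (subset_closure hne))

lemma mem_of_supp {g : X ≃ₜ X} {S : Set X} (hs : Supp g ⊆ S) {a : X} (ha : a ∈ S) :
    g a ∈ S := by
  by_contra hno
  have h1 : g (g a) = g a := fix_of_supp hs hno
  have h2 : g a = a := g.injective h1
  rw [h2] at hno; exact hno ha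

lemma exists_moved {g : X ≃ₜ X} (hg : g ≠ 1) : ∃ y, g y ≠ y := by
  by_contra hall
  push_neg at hall
  exact hg (Homeomorph.ext hall)

theorem map_recognition_small_supports
    {X : Type*} [TopologicalSpace X] [T2Space X]
    (Γ : Subgroup (X ≃ₜ X)) (hΓ : SmallSupportsEverywhere Γ)
    (f h : X ≃ₜ X)
    (φ : Subgroup.closure ((Γ : Set (X ≃ₜ X)) ∪ {f}) ≃*
         Subgroup.closure ((Γ : Set (X ≃ₜ X)) ∪ {h}))
    (hφΓ : ∀ (γ : X ≃ₜ X) (hγ : γ ∈ Γ),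
      ((φ ⟨γ, Subgroup.subset_closure (Set.mem_union_left _ hγ)⟩ : _) : X ≃ₜ X) = γ)
    (hφf : ((φ ⟨f, Subgroup.subset_closure
        (Set.mem_union_right _ (Set.mem_singleton f))⟩ : _) : X ≃ₜ X) = h) :
    h = f := by
  by_contra hne
  obtain ⟨x, hx⟩ : ∃ x, h x ≠ f x := by
    by_contra hall; push_neg at hall; exact hne (Homeomorph.ext hall)
  obtain ⟨U, V, hU, hV, hfxU, hhxV, hUV⟩ := t2_separation (Ne.symm hx)
  set W : Set X := (f : X → X) ⁻¹' U ∩ (h : X → X) ⁻¹' V with hWdef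
  have hWopen : IsOpen W := (hU.preimage f.continuous).inter (hV.preimage h.continuous)
  have hxW : x ∈ W := ⟨hfxU, hhxV⟩
  obtain ⟨γ₁, hγ₁Γ, hγ₁ne, hγ₁supp⟩ := hΓ W hWopen ⟨x, hxW⟩
  -- α = f γ₁ f⁻¹, β = h γ₁ h⁻¹
  set α : X ≃ₜ X := f * γ₁ * f⁻¹ with hαdef
  set β : X ≃ₜ X := h * γ₁ * h⁻¹ with hβdef
  have hα_apply : ∀ p, α p = f (γ₁ (f.symm p)) := fun p => rfl
  have hβ_apply : ∀ p, β p = h (γ₁ (h.symm p)) := fun p => rfl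
  -- β fixes everything outside V
  have hβfix : ∀ p, p ∉ V → β p = p := by
    intro p hp
    have : h.symm p ∉ W := by
      intro hmem
      exact hp (by simpa using hmem.2)
    rw [hβ_apply, fix_of_supp hγ₁supp this, h.apply_symm_apply]
  -- β maps V into V
  have hβV : ∀ p, p ∈ V → β p ∈ V := by
    intro p hp
    by_cases hmem : h.symm p ∈ W
    · have := mem_of_supp hγ₁supp hmem
      rw [hβ_apply]
      simpa using this.2
    · rw [hβ_apply, fix_of_supp hγ₁supp hmem, h.apply_symm_apply]; exact hp
  -- a moved point of α inside U
  obtain ⟨y, hy⟩ := exists_moved hγ₁ne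
  have hyW : y ∈ W := hγ₁supp (subset_closure hy)
  set z : X := f y with hzdef
  have hzU : z ∈ U := hyW.1
  have hαz : α z ≠ z := by
    rw [hα_apply, hzdef, f.symm_apply_apply]
    intro hc
    exact hy (f.injective hc)
  obtain ⟨N₁, N₂, hN₁, hN₂, hzN₁, hαzN₂, hN₁₂⟩ := t2_separation hαz.symm
  set N : Set X := N₁ ∩ (α : X → X) ⁻¹' N₂ ∩ U with hNdef
  have hNopen : IsOpen N :=
    ((hN₁.inter (hN₂.preimage α.continuous)).inter hU)
  have hzN : z ∈ N := ⟨⟨hzN₁, hαzN₂⟩, hzU⟩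
  obtain ⟨γ₂, hγ₂Γ, hγ₂ne, hγ₂supp⟩ := hΓ N hNopen ⟨z, hzN⟩
  -- β commutes with γ₂ pointwise
  have hNV : ∀ p, p ∈ N → p ∉ V := fun p hp => fun hv => hUV.ne_of_mem hp.2 hv rfl
  have hcomm : ∀ p, β (γ₂ p) = γ₂ (β p) := by
    intro p
    by_cases hpV : p ∈ V
    · have hpN : p ∉ N := fun hn => hNV p hn hpV
      rw [fix_of_supp hγ₂supp hpN]
      have hβpN : β p ∉ N := fun hn => hNV _ hn (hβV p hpV)
      rw [fix_of_supp hγ₂supp hβpN]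
    · rw [hβfix p hpV]
      by_cases hpN : p ∈ N
      · have : γ₂ p ∈ N := mem_of_supp hγ₂supp hpN
        rw [hβfix _ (hNV _ this)]
      · rw [fix_of_supp hγ₂supp hpN, hβfix p hpV]
  -- α does not commute with γ₂
  obtain ⟨p, hp⟩ := exists_moved hγ₂ne
  have hpN : p ∈ N := hγ₂supp (subset_closure hp)
  have hαinvp : α.symm p ∉ N := by
    intro hmem
    have : α (α.symm p) ∈ N₂ := hmem.1.2
    rw [α.apply_symm_apply] at this
    exact hN₁₂.ne_of_mem hpN.1.1 this rfl
  have hnotcomm : α * γ₂ ≠ γ₂ * α := by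
    intro hc
    have h1 : (α * γ₂ * α⁻¹) p = p := by
      show α (γ₂ (α.symm p)) = p
      rw [fix_of_supp hγ₂supp hαinvp, α.apply_symm_apply]
    have h2 : α * γ₂ * α⁻¹ = γ₂ := by
      rw [hc, mul_assoc, mul_inv_cancel, mul_one]
    rw [h2] at h1
    exact hp h1
  -- group-theoretic contradiction via φ
  set F : Subgroup.closure ((Γ : Set (X ≃ₜ X)) ∪ {f}) :=
    ⟨f, Subgroup.subset_closure (Set.mem_union_right _ (Set.mem_singleton f))⟩ with hF
  set G₁ : Subgroup.closure ((Γ : Set (X ≃ₜ X)) ∪ {f}) :=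
    ⟨γ₁, Subgroup.subset_closure (Set.mem_union_left _ hγ₁Γ)⟩ with hG₁
  set G₂ : Subgroup.closure ((Γ : Set (X ≃ₜ X)) ∪ {f}) :=
    ⟨γ₂, Subgroup.subset_closure (Set.mem_union_left _ hγ₂Γ)⟩ with hG₂
  have hφc : ∀ (a b : Subgroup.closure ((Γ : Set (X ≃ₜ X)) ∪ {f})), ((φ (a * b) : _) : X ≃ₜ X) = (φ a : X ≃ₜ X) * (φ b : X ≃ₜ X) := by
    intro a b
    rw [map_mul]; rfl
  have hφi : ∀ (a : Subgroup.closure ((Γ : Set (X ≃ₜ X)) ∪ {f})),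
      ((φ a⁻¹ : _) : X ≃ₜ X) = (φ a : X ≃ₜ X)⁻¹ := by
    intro a
    rw [map_inv]; rfl
  have key1 : ((φ (F * G₁ * F⁻¹ * G₂) : _) : X ≃ₜ X) = β * γ₂ := by
    rw [hφc, hφc, hφc, hφi, hF, hG₁, hG₂, hφf, hφΓ γ₁ hγ₁Γ, hφΓ γ₂ hγ₂Γ]
  have key2 : ((φ (G₂ * (F * G₁ * F⁻¹)) : _) : X ≃ₜ X) = γ₂ * β := by
    rw [hφc, hφc, hφc, hφi, hF, hG₁, hG₂, hφf, hφΓ γ₁ hγ₁Γ, hφΓ γ₂ hγ₂Γ]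
  have hβcomm : β * γ₂ = γ₂ * β := Homeomorph.ext fun p => hcomm p
  have heq : F * G₁ * F⁻¹ * G₂ = G₂ * (F * G₁ * F⁻¹) := by
    apply φ.injective
    apply Subtype.ext
    rw [key1, key2, hβcomm]
  have : α * γ₂ = γ₂ * α := by
    have := congrArg (Subtype.val) heq
    simpa [hαdef, mul_assoc] using this
  exact hnotcomm this
end

section
/- Let X be a Hausdorff topological space and let Γ ⊆ Homeo(X) be a subgroup with the contraction property. Let f, h ∈ Homeo(X) and suppose Supp(f) ≠ X. If there exists a group isomorphism φ : ⟨Γ, f⟩ → ⟨Γ, h⟩ such that φ(γ) = γ for every γ ∈ Γ and φ(f) = h, then h = f. -/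
open Set Topology

variable {X : Type*} [TopologicalSpace X]

/-- A subgroup `Γ ⊆ Homeo(X)` has the contraction property if for every nonempty open set
`U` there is `γ ∈ Γ` with `γ(X ∖ U) ⊆ U`. -/
def ContractionProperty (Γ : Subgroup (X ≃ₜ X)) : Prop :=
  ∀ U : Set X, IsOpen U → U.Nonempty → ∃ γ ∈ Γ, γ '' Uᶜ ⊆ U

lemma hmul_apply (f g : X ≃ₜ X) (x : X) : (f * g) x = f (g x) := rfl

lemma hinv_apply (f : X ≃ₜ X) (x : X) : (f⁻¹ : X ≃ₜ X) x = f.symm x := rfl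

lemma fixed_of_not_mem_supp {f : X ≃ₜ X} {x : X} (h : x ∉ Supp f) : f x = x := by
  by_contra hc
  exact h (subset_closure hc)

lemma mem_supp_of_moved {f : X ≃ₜ X} {x : X} (h : f x ≠ x) : x ∈ Supp f :=
  subset_closure h

lemma moved_apply {f : X ≃ₜ X} {x : X} (h : f x ≠ x) : f (f x) ≠ f x :=
  fun e => h (f.injective e)

lemma supp_conj (g f : X ≃ₜ X) : Supp (g * f * g⁻¹) = ⇑g '' Supp f := by
  have hset : {x | (g * f * g⁻¹) x ≠ x} = ⇑g '' {x | f x ≠ x} := by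
    ext x
    simp only [Set.mem_setOf_eq, Set.mem_image]
    constructor
    · intro hx
      refine ⟨g.symm x, ?_, g.apply_symm_apply x⟩
      intro hc
      apply hx
      show g (f (g.symm x)) = x
      rw [hc, g.apply_symm_apply]
    · rintro ⟨y, hy, rfl⟩
      intro hc
      apply hy
      have h2 : g (f (g.symm (g y))) = g y := hc
      rw [g.symm_apply_apply] at h2
      exact g.injective h2
  unfold Supp
  rw [hset, ← Homeomorph.image_closure]

lemma commute_of_disjoint_supp {f g : X ≃ₜ X}
    (hd : ∀ y, y ∈ Supp f → y ∉ Supp g) : f * g = g * f := by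
  apply Homeomorph.ext
  intro x
  show f (g x) = g (f x)
  by_cases hfx : f x = x
  · by_cases hgx : g x = x
    · rw [hgx, hfx, hgx]
    · have h1 : g x ∉ Supp f := fun hc => hd _ hc (mem_supp_of_moved (moved_apply hgx))
      have h2 : (x : X) ∉ Supp f := fun hc => hd _ hc (mem_supp_of_moved hgx)
      rw [fixed_of_not_mem_supp h1, hfx]
  · have h1 : g x = x := fixed_of_not_mem_supp (hd _ (mem_supp_of_moved hfx))
    have h2 : g (f x) = f x := fixed_of_not_mem_supp (hd _ (mem_supp_of_moved (moved_apply hfx)))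
    rw [h1, h2]

lemma contract_into {Γ : Subgroup (X ≃ₜ X)} (hΓ : ContractionProperty Γ)
    {V₁ V₂ : Set X} (h₁ : IsOpen V₁) (hn₁ : V₁.Nonempty) (h₂ : IsOpen V₂)
    (hn₂ : V₂.Nonempty) : ∃ δ ∈ Γ, ⇑δ '' V₁ᶜ ⊆ V₂ := by
  obtain ⟨γ₁, hγ₁Γ, hγ₁⟩ := hΓ V₁ h₁ hn₁
  obtain ⟨v₂, hv₂⟩ := hn₂
  by_cases hcase : v₂ ∈ V₁
  · obtain ⟨δ₀, hδ₀Γ, hδ₀⟩ := hΓ (V₁ ∩ V₂) (h₁.inter h₂) ⟨v₂, hcase, hv₂⟩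
    refine ⟨δ₀, hδ₀Γ, ?_⟩
    rintro _ ⟨x, hx, rfl⟩
    exact (hδ₀ ⟨x, fun hc => hx hc.1, rfl⟩).2
  · have hsymm : γ₁.symm v₂ ∈ V₁ := by
      by_contra hc
      exact hcase (by simpa [γ₁.apply_symm_apply] using hγ₁ ⟨γ₁.symm v₂, hc, rfl⟩)
    obtain ⟨δ₀, hδ₀Γ, hδ₀⟩ := hΓ (V₁ ∩ ⇑γ₁ ⁻¹' V₂)
      (h₁.inter (h₂.preimage γ₁.continuous))
      ⟨γ₁.symm v₂, hsymm, by simp [γ₁.apply_symm_apply, hv₂]⟩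
    refine ⟨γ₁ * δ₀, mul_mem hγ₁Γ hδ₀Γ, ?_⟩
    rintro _ ⟨x, hx, rfl⟩
    exact (hδ₀ ⟨x, fun hc => hx hc.1, rfl⟩).2

lemma no_isolated {Γ : Subgroup (X ≃ₜ X)} (hΓ : ContractionProperty Γ)
    {f : X ≃ₜ X} {w u : X} (hw : f w ≠ w) (hu : f u = u) (z : X) :
    ¬ IsOpen ({z} : Set X) := by
  intro hop
  obtain ⟨γ, _, hγ⟩ := hΓ {z} hop ⟨z, rfl⟩
  have hsub : ∀ a, a ≠ z → γ a = z := fun a ha => hγ ⟨a, ha, rfl⟩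
  have huniq : ∀ a b, a ≠ z → b ≠ z → a = b := fun a b ha hb =>
    γ.injective ((hsub a ha).trans (hsub b hb).symm)
  have hwfw : w ≠ f w := fun e => hw e.symm
  have huw : u ≠ w := fun e => hw (by rw [← e, hu, e])
  have hufw : u ≠ f w := fun e => huw (f.injective (hu.trans e))
  by_cases hzw : z = w
  · apply hufw
    apply huniq
    · intro e; exact huw (e.trans hzw)
    · intro e; exact hwfw (e.trans hzw).symm
  · by_cases hzfw : z = f w
    · apply huw
      apply huniq
      · intro e; exact hufw (e.trans hzfw)
      · intro e; exact hwfw (e.trans hzfw)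
    · exact hwfw (huniq w (f w) (fun e => hzw e.symm) (fun e => hzfw e.symm))

theorem map_recognition_contraction
    {X : Type*} [TopologicalSpace X] [T2Space X]
    (Γ : Subgroup (X ≃ₜ X)) (hΓ : ContractionProperty Γ)
    (f h : X ≃ₜ X) (hf : Supp f ≠ Set.univ)
    (φ : Subgroup.closure ((Γ : Set (X ≃ₜ X)) ∪ {f}) ≃*
         Subgroup.closure ((Γ : Set (X ≃ₜ X)) ∪ {h}))
    (hφΓ : ∀ (γ : X ≃ₜ X) (hγ : γ ∈ Γ),
      ((φ ⟨γ, Subgroup.subset_closure (Set.mem_union_left _ hγ)⟩ : _) : X ≃ₜ X) = γ)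
    (hφf : ((φ ⟨f, Subgroup.subset_closure
        (Set.mem_union_right _ (Set.mem_singleton f))⟩ : _) : X ≃ₜ X) = h) :
    h = f := by
  have memF : f ∈ Subgroup.closure ((Γ : Set (X ≃ₜ X)) ∪ {f}) :=
    Subgroup.subset_closure (Set.mem_union_right _ (Set.mem_singleton f))
  have memγ : ∀ γ : X ≃ₜ X, γ ∈ Γ → γ ∈ Subgroup.closure ((Γ : Set (X ≃ₜ X)) ∪ {f}) :=
    fun γ hγ => Subgroup.subset_closure (Set.mem_union_left _ hγ)
  -- transfer of commutation relations
  have key : ∀ a b : Subgroup.closure ((Γ : Set (X ≃ₜ X)) ∪ {f}),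
      (((a : X ≃ₜ X) * b = (b : X ≃ₜ X) * a) ↔
        ((φ a : X ≃ₜ X) * (φ b : X ≃ₜ X) = (φ b : X ≃ₜ X) * (φ a : X ≃ₜ X))) := by
    intro a b
    constructor
    · intro hc
      have h1 : a * b = b * a := Subtype.ext hc
      have h2 : φ (a * b) = φ (b * a) := congrArg φ h1
      rw [map_mul, map_mul] at h2
      exact congrArg Subtype.val h2
    · intro hc
      have h2 : φ a * φ b = φ b * φ a := Subtype.ext hc
      rw [← map_mul, ← map_mul] at h2
      exact congrArg Subtype.val (φ.injective h2)
  -- trivial case f = 1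
  by_cases hf1 : ∀ x : X, f x = x
  · have hF1 : (⟨f, memF⟩ : Subgroup.closure ((Γ : Set (X ≃ₜ X)) ∪ {f})) = 1 :=
      Subtype.ext (Homeomorph.ext fun x => hf1 x)
    have h1 := congrArg (fun x => ((φ x : _) : X ≃ₜ X)) hF1
    simp only [map_one] at h1
    rw [hφf] at h1
    exact h1.trans (Homeomorph.ext fun x => (hf1 x).symm)
  push_neg at hf1
  obtain ⟨w₀, hw₀⟩ := hf1
  obtain ⟨u₀, hu₀⟩ : ∃ u, u ∉ Supp f := by
    rw [← Set.ne_univ_iff_exists_notMem]; exact hf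
  have hWopen : IsOpen (Supp f)ᶜ := isClosed_closure.isOpen_compl
  have hWne : ((Supp f)ᶜ).Nonempty := ⟨u₀, hu₀⟩
  have hnoiso : ∀ z : X, ¬ IsOpen ({z} : Set X) :=
    fun z => no_isolated hΓ hw₀ (fixed_of_not_mem_supp hu₀) z
  -- Step 1 : h is the identity off Supp f
  have step1 : ∀ z, z ∉ Supp f → h z = z := by
    intro z hzW
    by_contra hz
    obtain ⟨Q, P₀, hQo, hP₀o, hhzQ, hzP₀, hdisj⟩ := t2_separation hz
    set P : Set X := P₀ ∩ (⇑h) ⁻¹' Q ∩ (Supp f)ᶜ with hPdef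
    have hPo : IsOpen P := (hP₀o.inter (hQo.preimage h.continuous)).inter hWopen
    have hzP : z ∈ P := ⟨⟨hzP₀, hhzQ⟩, hzW⟩
    have hPQ : ∀ y, y ∈ P → y ∉ Q := fun y hy hyQ =>
      (Set.disjoint_left.mp hdisj hyQ) hy.1.1
    have hhP : ∀ y, y ∈ P → h y ∈ Q := fun y hy => hy.1.2
    have hPne : ∃ w ∈ P, w ≠ z := by
      by_contra hcon
      push_neg at hcon
      apply hnoiso z
      have hPz : P = {z} := Set.eq_singleton_iff_unique_mem.mpr ⟨hzP, hcon⟩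
      exact hPz ▸ hPo
    obtain ⟨w, hwP, hwz⟩ := hPne
    obtain ⟨Z0, N, hZ0o, hNo, hzZ0, hwN, hZN⟩ := t2_separation (Ne.symm hwz)
    set P₁ : Set X := P ∩ N with hP₁def
    have hP₁o : IsOpen P₁ := hPo.inter hNo
    have hP₁ne : P₁.Nonempty := ⟨w, hwP, hwN⟩
    have hzP₁ : z ∉ P₁ := fun hc => Set.disjoint_left.mp hZN hzZ0 hc.2
    obtain ⟨γ, hγΓ, hγc⟩ := contract_into hΓ hPo ⟨z, hzP⟩ hP₁o hP₁ne
    have hi : ∀ y, y ∉ P → γ y ∈ P₁ := fun y hy => hγc ⟨y, hy, rfl⟩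
    have hii : ∀ y, y ∉ P₁ → γ.symm y ∈ P := by
      intro y hy
      by_contra hc
      exact hy (by simpa [γ.apply_symm_apply] using hi _ hc)
    have hsuppk : Supp (γ * f * γ⁻¹) ⊆ P₁ := by
      rw [supp_conj]
      rintro _ ⟨y, hyS, rfl⟩
      exact hi y (fun hyP => hyP.2 hyS)
    have hcommf : f * (γ * f * γ⁻¹) = (γ * f * γ⁻¹) * f :=
      commute_of_disjoint_supp (fun y hyf hyk => ((hsuppk hyk).1).2 hyf)
    have hcommh : h * (γ * h * γ⁻¹) = (γ * h * γ⁻¹) * h := by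
      have hb : ((φ (⟨γ, memγ γ hγΓ⟩ * ⟨f, memF⟩ * (⟨γ, memγ γ hγΓ⟩)⁻¹) : _) : X ≃ₜ X)
          = γ * h * γ⁻¹ := by
        simp only [map_mul, map_inv]
        push_cast
        rw [hφΓ γ hγΓ, hφf]
      have h1 := (key ⟨f, memF⟩
        (⟨γ, memγ γ hγΓ⟩ * ⟨f, memF⟩ * (⟨γ, memγ γ hγΓ⟩)⁻¹)).mp hcommf
      rw [hφf, hb] at h1
      exact h1
    have heval := DFunLike.congr_fun hcommh z
    have heval' : h (γ (h (γ.symm z))) = γ (h (γ.symm (h z))) := heval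
    have h1 : γ.symm z ∈ P := hii z hzP₁
    have h2 : h (γ.symm z) ∈ Q := hhP _ h1
    have h3 : h (γ.symm z) ∉ P := fun hc => hPQ _ hc h2
    have h4 : γ (h (γ.symm z)) ∈ P₁ := hi _ h3
    have h5 : h (γ (h (γ.symm z))) ∈ Q := hhP _ h4.1
    have h6 : h z ∈ Q := hhP _ hzP
    have h7 : h z ∉ P₁ := fun hc => hPQ _ hc.1 h6
    have h8 : γ.symm (h z) ∈ P := hii _ h7
    have h9 : h (γ.symm (h z)) ∈ Q := hhP _ h8
    have h10 : h (γ.symm (h z)) ∉ P := fun hc => hPQ _ hc h9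
    have h11 : γ (h (γ.symm (h z))) ∈ P₁ := hi _ h10
    exact hPQ _ h11.1 (heval' ▸ h5)
  have hsupph : Supp h ⊆ Supp f :=
    closure_minimal (fun y hy => by
      by_contra hc
      exact hy (step1 y hc)) isClosed_closure
  -- Step 2 : h = f pointwise
  apply Homeomorph.ext
  intro x
  by_contra hne
  obtain ⟨A, B, hAo, hBo, hpA, hqB, hAB⟩ := t2_separation (Ne.symm hne)
  set U : Set X := (⇑f) ⁻¹' A ∩ (⇑h) ⁻¹' B with hUdef
  have hUo : IsOpen U := (hAo.preimage f.continuous).inter (hBo.preimage h.continuous)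
  have hxU : x ∈ U := ⟨hpA, hqB⟩
  obtain ⟨δ, hδΓ, hδc⟩ := contract_into hΓ hWopen hWne hUo ⟨x, hxU⟩
  have hδS : ∀ y, y ∈ Supp f → δ y ∈ U := fun y hy =>
    hδc ⟨y, fun hc => hc hy, rfl⟩
  have hsuppa : Supp (δ * f * δ⁻¹) ⊆ U := by
    rw [supp_conj]; rintro _ ⟨y, hy, rfl⟩; exact hδS y hy
  have hsuppa' : Supp (δ * h * δ⁻¹) ⊆ U := by
    rw [supp_conj]; rintro _ ⟨y, hy, rfl⟩; exact hδS y (hsupph hy)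
  set c : X ≃ₜ X := f * (δ * f * δ⁻¹) * f⁻¹ with hcdef
  have hsuppc : Supp c ⊆ ⇑f '' U := by
    rw [hcdef, supp_conj]; exact Set.image_mono hsuppa
  have hsuppc' : Supp (h * (δ * h * δ⁻¹) * h⁻¹) ⊆ ⇑h '' U := by
    rw [supp_conj]; exact Set.image_mono hsuppa'
  have hfU : ∀ y, y ∈ ⇑f '' U → y ∈ A := by rintro _ ⟨u, hu, rfl⟩; exact hu.1
  have hhU : ∀ y, y ∈ ⇑h '' U → y ∈ B := by rintro _ ⟨u, hu, rfl⟩; exact hu.2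
  have hw₀S : w₀ ∈ Supp f := mem_supp_of_moved hw₀
  have hfw₀S : f w₀ ∈ Supp f := mem_supp_of_moved (moved_apply hw₀)
  have hcr : c (f (δ w₀)) = f (δ (f w₀)) := by
    show f ((δ * f * δ⁻¹) (f.symm (f (δ w₀)))) = f (δ (f w₀))
    rw [f.symm_apply_apply]
    show f (δ (f (δ.symm (δ w₀)))) = f (δ (f w₀))
    rw [δ.symm_apply_apply]
  have hrr' : f (δ w₀) ≠ f (δ (f w₀)) := fun e =>
    hw₀ (δ.injective (f.injective e)).symm
  have hrA : f (δ w₀) ∈ A := hfU _ ⟨δ w₀, hδS _ hw₀S, rfl⟩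
  obtain ⟨R, R', hRo, hR'o, hrR, hr'R', hRR'⟩ := t2_separation hrr'
  set T : Set X := (A ∩ R) ∩ (⇑c) ⁻¹' R' with hTdef
  have hTo : IsOpen T := (hAo.inter hRo).inter (hR'o.preimage c.continuous)
  have hrT : f (δ w₀) ∈ T := ⟨⟨hrA, hrR⟩, by
    show c (f (δ w₀)) ∈ R'
    rw [hcr]; exact hr'R'⟩
  obtain ⟨ε, hεΓ, hεc⟩ := contract_into hΓ hWopen hWne hTo ⟨_, hrT⟩
  have hεS : ∀ y, y ∈ Supp f → ε y ∈ T := fun y hy =>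
    hεc ⟨y, fun hc => hc hy, rfl⟩
  have hsuppb : Supp (ε * f * ε⁻¹) ⊆ T := by
    rw [supp_conj]; rintro _ ⟨y, hy, rfl⟩; exact hεS y hy
  have hsuppb' : Supp (ε * h * ε⁻¹) ⊆ T := by
    rw [supp_conj]; rintro _ ⟨y, hy, rfl⟩; exact hεS y (hsupph hy)
  have hcomm' : (h * (δ * h * δ⁻¹) * h⁻¹) * (ε * h * ε⁻¹)
      = (ε * h * ε⁻¹) * (h * (δ * h * δ⁻¹) * h⁻¹) :=
    commute_of_disjoint_supp (fun y hy hy' =>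
      Set.disjoint_left.mp hAB (hsuppb' hy').1.1 (hhU _ (hsuppc' hy)))
  -- transfer back
  have hcommc : c * (ε * f * ε⁻¹) = (ε * f * ε⁻¹) * c := by
    have hac : ((φ (⟨f, memF⟩ * (⟨δ, memγ δ hδΓ⟩ * ⟨f, memF⟩ * (⟨δ, memγ δ hδΓ⟩)⁻¹)
        * (⟨f, memF⟩)⁻¹) : _) : X ≃ₜ X) = h * (δ * h * δ⁻¹) * h⁻¹ := by
      simp only [map_mul, map_inv]
      push_cast
      rw [hφΓ δ hδΓ, hφf]
    have hbc : ((φ (⟨ε, memγ ε hεΓ⟩ * ⟨f, memF⟩ * (⟨ε, memγ ε hεΓ⟩)⁻¹) : _) : X ≃ₜ X)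
        = ε * h * ε⁻¹ := by
      simp only [map_mul, map_inv]
      push_cast
      rw [hφΓ ε hεΓ, hφf]
    have h1 := (key (⟨f, memF⟩ * (⟨δ, memγ δ hδΓ⟩ * ⟨f, memF⟩ * (⟨δ, memγ δ hδΓ⟩)⁻¹)
        * (⟨f, memF⟩)⁻¹) (⟨ε, memγ ε hεΓ⟩ * ⟨f, memF⟩ * (⟨ε, memγ ε hεΓ⟩)⁻¹)).mpr
      (by rw [hac, hbc]; exact hcomm')
    exact h1
  -- contradiction at ε w₀
  have hsT : ε w₀ ∈ T := hεS _ hw₀S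
  have hbs : (ε * f * ε⁻¹) (ε w₀) = ε (f w₀) := by
    show ε (f (ε.symm (ε w₀))) = ε (f w₀)
    rw [ε.symm_apply_apply]
  have hbs_ne : ε (f w₀) ≠ ε w₀ := fun e => hw₀ (ε.injective e)
  have hcsR' : c (ε w₀) ∈ R' := hsT.2
  have hcsnotT : c (ε w₀) ∉ T := fun hc => Set.disjoint_left.mp hRR' hc.1.2 hcsR'
  have hbfix : (ε * f * ε⁻¹) (c (ε w₀)) = c (ε w₀) :=
    fixed_of_not_mem_supp (fun hc => hcsnotT (hsuppb hc))
  have heval := DFunLike.congr_fun hcommc (ε w₀)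
  have heval' : c ((ε * f * ε⁻¹) (ε w₀)) = (ε * f * ε⁻¹) (c (ε w₀)) := heval
  rw [hbs, hbfix] at heval'
  exact hbs_ne (c.injective heval')
end

section
/- Let X be a Hausdorff topological space without isolated points and let Γ ⊆ Homeo(X) be a subgroup with the contraction property. Let f, h ∈ Homeo(X), and suppose there exists a group isomorphism φ : ⟨Γ, f⟩ → ⟨Γ, h⟩ such that φ(γ) = γ for every γ ∈ Γ and φ(f) = h. Then Supp(f) = Supp(h). -/
open Set Topology

variable {X : Type*} [TopologicalSpace X]

private lemma supp_subset_aux {X : Type*} [TopologicalSpace X] [T2Space X]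
    (hX : ∀ x : X, ¬ IsOpen ({x} : Set X))
    (Γ : Subgroup (X ≃ₜ X)) (hΓ : ContractionProperty Γ)
    (f h : X ≃ₜ X)
    (key : ∀ γ ∈ Γ, h * (γ * h * γ⁻¹) = (γ * h * γ⁻¹) * h →
      f * (γ * f * γ⁻¹) = (γ * f * γ⁻¹) * f) :
    Supp f ⊆ Supp h := by
  intro x hxf
  by_contra hxh
  set U : Set X := (Supp h)ᶜ with hUdef
  have hUopen : IsOpen U := isClosed_closure.isOpen_compl
  have hxU : x ∈ U := hxh
  have hid : ∀ u ∈ U, h u = u := by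
    intro u hu
    by_contra hne
    exact hu (subset_closure hne)
  have hmove : ∀ w, h w ≠ w → h w ∉ U := by
    intro w hw hwU
    exact hw (h.injective (hid _ hwU))
  obtain ⟨z, hzU, hz⟩ : ∃ z ∈ U, f z ≠ z := by
    obtain ⟨z, hz1, hz2⟩ := mem_closure_iff.mp hxf U hUopen hxU
    exact ⟨z, hz1, hz2⟩
  obtain ⟨B, A, hBopen, hAopen, hfzB, hzA, hAB⟩ := t2_separation hz
  set V : Set X := U ∩ A ∩ f ⁻¹' B with hVdef
  have hVopen : IsOpen V := (hUopen.inter hAopen).inter (hBopen.preimage f.continuous)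
  have hzV : z ∈ V := ⟨⟨hzU, hzA⟩, hfzB⟩
  have hVU : V ⊆ U := fun y hy => hy.1.1
  have hfV : ∀ v ∈ V, f v ∉ V := by
    intro v hv hfvV
    exact (hAB.ne_of_mem hv.2 hfvV.1.2) rfl
  obtain ⟨z', hz'V, hz'ne⟩ : ∃ z' ∈ V, z' ≠ z := by
    by_contra hcon
    push_neg at hcon
    apply hX z
    have : V = {z} := subset_antisymm (fun y hy => hcon y hy) (by simpa using hzV)
    rw [← this]
    exact hVopen
  set V₀ : Set X := V ∩ {z'}ᶜ with hV₀def
  have hV₀open : IsOpen V₀ := hVopen.inter isClosed_singleton.isOpen_compl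
  have hzV₀ : z ∈ V₀ := ⟨hzV, by simpa using hz'ne.symm⟩
  have hV₀V : V₀ ⊆ V := fun y hy => hy.1
  have hV₀U : V₀ ⊆ U := fun y hy => hVU hy.1
  obtain ⟨γ, hγΓ, hγc⟩ := hΓ V₀ hV₀open ⟨z, hzV₀⟩
  have hγ1 : ∀ y, y ∉ V₀ → γ y ∈ V₀ := fun y hy => hγc ⟨y, hy, rfl⟩
  have hγ2 : ∀ y, y ∉ V₀ → γ.symm y ∈ V₀ := by
    intro y hy
    by_contra hcon
    exact hy (by simpa using hγ1 _ hcon)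
  have expand : ∀ w, (γ * h * γ⁻¹) w = γ (h (γ.symm w)) := fun _ => rfl
  have gfix : ∀ w, w ∉ V₀ → (γ * h * γ⁻¹) w = w := by
    intro w hw
    rw [expand, hid _ (hV₀U (hγ2 w hw)), γ.apply_symm_apply]
  have gmem : ∀ w, (γ * h * γ⁻¹) w ≠ w → (γ * h * γ⁻¹) w ∈ V₀ := by
    intro w hw
    rw [expand] at hw ⊢
    have h1 : h (γ.symm w) ≠ γ.symm w := by
      intro e
      exact hw (by rw [e, γ.apply_symm_apply])
    have h2 : h (γ.symm w) ∉ U := hmove _ h1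
    exact hγ1 _ (fun hm => h2 (hV₀U hm))
  have hcomm : h * (γ * h * γ⁻¹) = (γ * h * γ⁻¹) * h := by
    apply Homeomorph.ext
    intro y
    show h ((γ * h * γ⁻¹) y) = (γ * h * γ⁻¹) (h y)
    by_cases hyU : y ∈ U
    · rw [hid y hyU]
      by_cases hgy : (γ * h * γ⁻¹) y = y
      · rw [hgy, hid y hyU]
      · exact hid _ (hV₀U (gmem y hgy))
    · have hyV₀ : y ∉ V₀ := fun hm => hyU (hV₀U hm)
      rw [gfix y hyV₀]
      by_cases hhy : h y = y
      · rw [hhy, gfix y hyV₀]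
      · exact (gfix (h y) (fun hm => hmove y hhy (hV₀U hm))).symm
  have fcomm := key γ hγΓ hcomm
  have hz'V₀ : z' ∉ V₀ := fun hm => hm.2 rfl
  have hp : γ z' ∈ V₀ := hγ1 _ hz'V₀
  have hfz' : f z' ∉ V₀ := fun hm => hfV z' hz'V (hV₀V hm)
  have hL : (f * (γ * f * γ⁻¹)) (γ z') ∉ V₀ := by
    show f (γ (f (γ.symm (γ z')))) ∉ V₀
    rw [γ.symm_apply_apply]
    exact fun hm => hfV _ (hV₀V (hγ1 _ hfz')) (hV₀V hm)
  have hR : ((γ * f * γ⁻¹) * f) (γ z') ∈ V₀ := by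
    show γ (f (γ.symm (f (γ z')))) ∈ V₀
    have h1 : f (γ z') ∉ V₀ := fun hm => hfV _ (hV₀V hp) (hV₀V hm)
    have h2 : γ.symm (f (γ z')) ∈ V₀ := hγ2 _ h1
    have h3 : f (γ.symm (f (γ z'))) ∉ V₀ := fun hm => hfV _ (hV₀V h2) (hV₀V hm)
    exact hγ1 _ h3
  rw [fcomm] at hL
  exact hL hR

theorem supp_eq_of_iso_contraction
    {X : Type*} [TopologicalSpace X] [T2Space X]
    (hX : ∀ x : X, ¬ IsOpen ({x} : Set X))
    (Γ : Subgroup (X ≃ₜ X)) (hΓ : ContractionProperty Γ)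
    (f h : X ≃ₜ X)
    (φ : Subgroup.closure ((Γ : Set (X ≃ₜ X)) ∪ {f}) ≃*
         Subgroup.closure ((Γ : Set (X ≃ₜ X)) ∪ {h}))
    (hφΓ : ∀ (γ : X ≃ₜ X) (hγ : γ ∈ Γ),
      ((φ ⟨γ, Subgroup.subset_closure (Set.mem_union_left _ hγ)⟩ : _) : X ≃ₜ X) = γ)
    (hφf : ((φ ⟨f, Subgroup.subset_closure
        (Set.mem_union_right _ (Set.mem_singleton f))⟩ : _) : X ≃ₜ X) = h) :
    Supp f = Supp h := by
  have key : ∀ γ ∈ Γ, (f * (γ * f * γ⁻¹) = (γ * f * γ⁻¹) * f ↔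
      h * (γ * h * γ⁻¹) = (γ * h * γ⁻¹) * h) := by
    intro γ hγ
    have hfmem : f ∈ Subgroup.closure ((Γ : Set (X ≃ₜ X)) ∪ {f}) :=
      Subgroup.subset_closure (Set.mem_union_right _ rfl)
    have hγmem : γ ∈ Subgroup.closure ((Γ : Set (X ≃ₜ X)) ∪ {f}) :=
      Subgroup.subset_closure (Set.mem_union_left _ hγ)
    have hhmem : h ∈ Subgroup.closure ((Γ : Set (X ≃ₜ X)) ∪ {h}) :=
      Subgroup.subset_closure (Set.mem_union_right _ rfl)
    have hγmem2 : γ ∈ Subgroup.closure ((Γ : Set (X ≃ₜ X)) ∪ {h}) :=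
      Subgroup.subset_closure (Set.mem_union_left _ hγ)
    set fe : Subgroup.closure ((Γ : Set (X ≃ₜ X)) ∪ {f}) := ⟨f, hfmem⟩ with hfe
    set γe : Subgroup.closure ((Γ : Set (X ≃ₜ X)) ∪ {f}) := ⟨γ, hγmem⟩ with hγe
    have hφf' : φ fe = ⟨h, hhmem⟩ := Subtype.ext hφf
    have hφγ' : φ γe = ⟨γ, hγmem2⟩ := Subtype.ext (hφΓ γ hγ)
    constructor
    · intro hc
      have e1 : fe * (γe * fe * γe⁻¹) = (γe * fe * γe⁻¹) * fe := by
        apply Subtype.ext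
        push_cast [hfe, hγe]
        exact hc
      have e2 := congrArg φ e1
      simp only [map_mul, map_inv, hφf', hφγ'] at e2
      have e3 := congrArg Subtype.val e2
      simpa using e3
    · intro hc
      have e1 : φ (fe * (γe * fe * γe⁻¹)) = φ ((γe * fe * γe⁻¹) * fe) := by
        simp only [map_mul, map_inv, hφf', hφγ']
        apply Subtype.ext
        push_cast
        exact hc
      have e3 := congrArg Subtype.val (φ.injective e1)
      simp only [hfe, hγe] at e3
      simpa using e3
  apply subset_antisymm
  · exact supp_subset_aux hX Γ hΓ f h (fun γ hγ hc => (key γ hγ).mpr hc)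
  · exact supp_subset_aux hX Γ hΓ h f (fun γ hγ hc => (key γ hγ).mp hc)
end

section
/- Let u, v, w ∈ Homeo₊(ℝ). Suppose that u and v commute, that u(x) ≠ x and v(x) ≠ x for every x ∈ ℝ (i.e. u and v have no fixed points), that u(x) < v(x) for every x ∈ ℝ, and that w ∘ u ∘ w⁻¹ = v. Then w has a fixed point, i.e. there exists x ∈ ℝ with w(x) = x. -/
theorem conjugator_has_fixed_point
    (u v w : ℝ ≃ₜ ℝ)
    (hu : StrictMono u) (hv : StrictMono v) (hw : StrictMono w)
    (hcomm : ∀ x : ℝ, u (v x) = v (u x))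
    (hufix : ∀ x : ℝ, u x ≠ x) (hvfix : ∀ x : ℝ, v x ≠ x)
    (huv : ∀ x : ℝ, u x < v x)
    (hconj : ∀ x : ℝ, w (u (w.symm x)) = v x) :
    ∃ x : ℝ, w x = x := by
  by_contra hfixall
  push_neg at hfixall
  -- the "difference" homeomorphism h = v ∘ u⁻¹
  set h : ℝ → ℝ := fun y => v (u.symm y) with hh_def
  set s : ℝ → ℝ := fun y => u.symm y with hs_def
  have hus : StrictMono s := by
    intro a b hab
    have h1 := hu.lt_iff_lt (a := u.symm a) (b := u.symm b)
    simp only [Homeomorph.apply_symm_apply] at h1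
    exact h1.mp hab
  have hsm_h : StrictMono h := fun a b hab => hv (hus hab)
  have hgt : ∀ x, x < h x := by
    intro x
    have := huv (u.symm x)
    simpa [hh_def] using this
  have hcont_h : Continuous h := v.continuous.comp u.symm.continuous
  have Hhu : Function.Commute h ⇑u := by
    intro x
    show h (u x) = u (h x)
    simp only [hh_def, Homeomorph.symm_apply_apply]
    rw [hcomm (u.symm x), Homeomorph.apply_symm_apply]
  have hrel : ∀ x, w (u x) = u (h (w x)) := by
    intro x
    have h1 := hconj (w x)
    rw [Homeomorph.symm_apply_apply] at h1
    rw [h1]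
    simp only [hh_def]
    rw [hcomm (u.symm (w x)), Homeomorph.apply_symm_apply]
  -- strict monotone iterates
  have huit : ∀ n : ℕ, StrictMono (⇑u)^[n] := fun n => hu.iterate n
  have hhit : ∀ n : ℕ, StrictMono h^[n] := fun n => hsm_h.iterate n
  -- key relation A
  have relA : ∀ (n : ℕ) (x : ℝ), w ((⇑u)^[n] x) = (⇑u)^[n] (h^[n] (w x)) := by
    intro n
    induction n with
    | zero => intro x; simp
    | succ n ih =>
      intro x
      rw [Function.iterate_succ_apply' (⇑u), Function.iterate_succ_apply' (⇑u),
        Function.iterate_succ_apply' h, hrel, ih]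
      congr 1
      exact (Hhu.iterate_right n) (h^[n] (w x))
  -- u^[n] ∘ s^[n] = id
  have usn : ∀ (n : ℕ) (x : ℝ), (⇑u)^[n] ((s)^[n] x) = x := by
    intro n
    induction n with
    | zero => intro x; simp
    | succ n ih =>
      intro x
      rw [Function.iterate_succ_apply' s, Function.iterate_succ_apply (⇑u)]
      show (⇑u)^[n] (u (u.symm (s^[n] x))) = x
      rw [Homeomorph.apply_symm_apply]
      exact ih x
  -- key relation B
  have relB : ∀ (n : ℕ) (x : ℝ), (⇑u)^[n] (h^[n] (w (s^[n] x))) = w x := by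
    intro n
    induction n with
    | zero => intro x; simp
    | succ n ih =>
      intro x
      rw [Function.iterate_succ_apply s, Function.iterate_succ_apply' (⇑u),
        Function.iterate_succ_apply' h]
      rw [← (Hhu.iterate_right n) (h^[n] (w (s^[n] (s x))))]
      rw [ih (s x)]
      rw [← hrel (s x)]
      show w (u (u.symm x)) = w x
      rw [Homeomorph.apply_symm_apply]
  -- escape lemma: iterates of h go to +∞
  have escape : ∀ x C : ℝ, ∃ n : ℕ, C < h^[n] x := by
    intro x C
    by_contra hb
    push_neg at hb
    have hmono : Monotone (fun n => h^[n] x) := by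
      apply monotone_nat_of_le_succ
      intro n
      rw [Function.iterate_succ_apply']
      exact (hgt _).le
    have hbdd : BddAbove (Set.range fun n => h^[n] x) := by
      refine ⟨C, ?_⟩
      rintro y ⟨n, rfl⟩
      exact hb n
    have hlim := tendsto_atTop_ciSup hmono hbdd
    set L := ⨆ n, h^[n] x with hL
    have h1 : Filter.Tendsto (fun n => h^[n+1] x) Filter.atTop (nhds L) :=
      hlim.comp (Filter.tendsto_add_atTop_nat 1)
    have h2 : Filter.Tendsto (fun n => h (h^[n] x)) Filter.atTop (nhds (h L)) :=
      (hcont_h.tendsto L).comp hlim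
    have h3 : (fun n => h (h^[n] x)) = fun n => h^[n+1] x := by
      funext n; rw [Function.iterate_succ_apply']
    rw [h3] at h2
    have hfl : h L = L := tendsto_nhds_unique h2 h1
    exact absurd hfl.symm (ne_of_lt (hgt L))
  -- sign dichotomy for w
  have hsign : (∀ x, x < w x) ∨ (∀ x, w x < x) := by
    by_contra hc
    push_neg at hc
    obtain ⟨⟨a, ha⟩, ⟨b, hb⟩⟩ := hc
    have ha' : w a < a := lt_of_le_of_ne ha (hfixall a)
    have hb' : b < w b := lt_of_le_of_ne hb (fun e => hfixall b e.symm)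
    have hcontf : Continuous (fun x => w x - x) := w.continuous.sub continuous_id
    rcases le_total a b with hab | hab
    · have := intermediate_value_Icc hab hcontf.continuousOn (a := a) (b := b)
      have hmem : (0:ℝ) ∈ Set.Icc (w a - a) (w b - b) :=
        ⟨by linarith, by linarith⟩
      obtain ⟨c, _, hc0⟩ := this hmem
      exact hfixall c (by dsimp at hc0; linarith)
    · have := intermediate_value_Icc' hab hcontf.continuousOn (a := b) (b := a)
      have hmem : (0:ℝ) ∈ Set.Icc (w a - a) (w b - b) :=
        ⟨by linarith, by linarith⟩
      obtain ⟨c, _, hc0⟩ := this hmem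
      exact hfixall c (by dsimp at hc0; linarith)
  rcases hsign with hup | hdown
  · -- w > id : use relB; get h^[n] 0 < w 0 for all n
    obtain ⟨n, hn⟩ := escape 0 (w 0)
    have h1 : s^[n] 0 < w (s^[n] 0) := hup _
    have h2 : (⇑u)^[n] (h^[n] (s^[n] 0)) < (⇑u)^[n] (h^[n] (w (s^[n] 0))) :=
      (huit n) ((hhit n) h1)
    rw [relB n 0] at h2
    have h3 : (⇑u)^[n] (h^[n] (s^[n] 0)) = h^[n] 0 := by
      have hcom := ((Hhu.iterate_left n).iterate_right n) (s^[n] 0)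
      rw [← hcom, usn n 0]
    rw [h3] at h2
    exact absurd h2 (not_lt.mpr hn.le)
  · -- w < id : use relA; get h^[n] (w 0) < 0 for all n
    obtain ⟨n, hn⟩ := escape (w 0) 0
    have h1 : w ((⇑u)^[n] 0) < (⇑u)^[n] 0 := hdown _
    rw [relA n 0] at h1
    have h2 : h^[n] (w 0) < 0 := (huit n).lt_iff_lt.mp h1
    exact absurd h2 (not_lt.mpr hn.le)
end
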